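/- Let $X$ be a set with two binary operations $(a,b) \mapsto a^b$ and $(a,b) \mapsto a_b$ satisfying the three birack Yang–Baxter identities $a^{bc_b} = a^{cb^c}$, $c_{ba^b} = c_{ab_a}$, and $(b_a)^{c_a} = (b^c)_{a^c}$ for all $a,b,c$ (here $a^{bc_b}$ means $(a^b)^{c_b}$, etc.). For $n \geq 1$ let $C_n$ be the free abelian group on words $a_1 \cdots a_n$ of length $n$ in $X$, and define $\partial : C_n \to C_{n-1}$ by $\partial = \sum_{i=1}^{n}(-1)^i(\partial_i^- - \partial_i^+)$, where $\partial_i^-(a_1\cdots a_n) = a_1 \cdots a_{i-1} a_{i+1} \cdots a_n$ and $\partial_i^+(a_1 \cdots a_n) = (a_1)^{a_i}\cdots(a_{i-1})^{a_i}(a_{i+1})_{a_i}\cdots(a_n)_{a_i}$. Then $\partial \circ \partial = 0$, so $(C_*, \partial)$ is a chain complex. -/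

import Mathlib

/-- Face `∂_i^-`: delete the `i`-th letter of the word. -/
def faceMinus {X : Type*} {n : ℕ} (w : Fin (n + 1) → X) (i : Fin (n + 1)) :
    Fin n → X := fun k => w (i.succAbove k)

/-- Face `∂_i^+`: delete the `i`-th letter, acting by `(·)^{a_i}` on the letters
before position `i` and by `(·)_{a_i}` on the letters after position `i`. -/
def facePlus {X : Type*} (up dn : X → X → X) {n : ℕ} (w : Fin (n + 1) → X)
    (i : Fin (n + 1)) : Fin n → X :=
  fun k => if i.succAbove k < i then up (w (i.succAbove k)) (w i)
           else dn (w (i.succAbove k)) (w i)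

/-- The birack boundary map `∂ = ∑ᵢ (-1)ⁱ (∂_i^- - ∂_i^+)` on the free abelian group
on `n`-cubes (words of length `n` in `X`). -/
noncomputable def birackBoundary {X : Type*} (up dn : X → X → X) (n : ℕ) :
    FreeAbelianGroup (Fin (n + 1) → X) →+ FreeAbelianGroup (Fin n → X) :=
  FreeAbelianGroup.lift fun w =>
    ∑ i : Fin (n + 1), ((-1 : ℤ) ^ ((i : ℕ) + 1)) •
      (FreeAbelianGroup.of (faceMinus w i) - FreeAbelianGroup.of (facePlus up dn w i))

namespace BirackAux

lemma val_succAbove {n : ℕ} (p : Fin (n+1)) (k : Fin n) :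
    (p.succAbove k : ℕ) = if (k:ℕ) < (p:ℕ) then (k:ℕ) else (k:ℕ)+1 := by
  rw [Fin.succAbove]
  split_ifs with h1 h2 h2 <;> simp_all [Fin.lt_def]

variable {X : Type*} {up dn : X → X → X} {n : ℕ} {j : Fin (n+2)} {i : Fin (n+1)}

lemma idx_comm (h : (i:ℕ) < (j:ℕ)) (hj : j ≠ 0) (k : Fin n) :
    j.succAbove (i.succAbove k) = (i.castSucc).succAbove ((j.pred hj).succAbove k) := by
  apply Fin.ext
  simp only [val_succAbove, Fin.coe_castSucc, Fin.coe_pred]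
  split_ifs <;> omega

lemma idx_left (h : (i:ℕ) < (j:ℕ)) : j.succAbove i = i.castSucc := by
  apply Fin.ext; simp only [val_succAbove, Fin.coe_castSucc]; split_ifs <;> omega

lemma idx_right (h : (i:ℕ) < (j:ℕ)) (hj : j ≠ 0) :
    (i.castSucc).succAbove (j.pred hj) = j := by
  apply Fin.ext; simp only [val_succAbove, Fin.coe_castSucc, Fin.coe_pred]
  split_ifs <;> omega

lemma faceMM (h : (i:ℕ) < (j:ℕ)) (hj : j ≠ 0) (w : Fin (n+2) → X) :
    faceMinus (faceMinus w j) i = faceMinus (faceMinus w i.castSucc) (j.pred hj) := by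
  funext k
  simp only [faceMinus]
  rw [← idx_comm h hj k]

lemma facePM (h : (i:ℕ) < (j:ℕ)) (hj : j ≠ 0) (w : Fin (n+2) → X) :
    facePlus up dn (faceMinus w j) i
      = faceMinus (facePlus up dn w i.castSucc) (j.pred hj) := by
  funext k
  simp only [faceMinus, facePlus]
  rw [← idx_comm h hj k, idx_left h]
  simp only [Fin.lt_def, val_succAbove, Fin.coe_castSucc, Fin.coe_pred]
  split_ifs <;> first | rfl | omega

lemma faceMP (h : (i:ℕ) < (j:ℕ)) (hj : j ≠ 0) (w : Fin (n+2) → X) :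
    faceMinus (facePlus up dn w j) i
      = facePlus up dn (faceMinus w i.castSucc) (j.pred hj) := by
  funext k
  simp only [faceMinus, facePlus]
  rw [← idx_comm h hj k, idx_right h hj]
  simp only [Fin.lt_def, val_succAbove, Fin.coe_castSucc, Fin.coe_pred]
  split_ifs <;> first | rfl | omega

lemma facePP (hYB1 : ∀ a b c : X, up (up a b) (dn c b) = up (up a c) (up b c))
    (hYB2 : ∀ a b c : X, dn (dn c b) (up a b) = dn (dn c a) (dn b a))
    (hYB3 : ∀ a b c : X, up (dn b a) (dn c a) = dn (up b c) (up a c))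
    (h : (i:ℕ) < (j:ℕ)) (hj : j ≠ 0) (w : Fin (n+2) → X) :
    facePlus up dn (facePlus up dn w j) i
      = facePlus up dn (facePlus up dn w i.castSucc) (j.pred hj) := by
  funext k
  simp only [facePlus]
  rw [← idx_comm h hj k, idx_left h, idx_right h hj]
  simp only [Fin.lt_def, val_succAbove, Fin.coe_castSucc, Fin.coe_pred]
  split_ifs <;>
    first | omega | exact (hYB1 _ _ _).symm | exact hYB2 _ _ _ | exact (hYB3 _ _ _).symm

/-- The four-face combination appearing in `∂∘∂`. -/
noncomputable def T (up dn : X → X → X) (w : Fin (n+2) → X) (j : Fin (n+2))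
    (i : Fin (n+1)) : FreeAbelianGroup (Fin n → X) :=
  (FreeAbelianGroup.of (faceMinus (faceMinus w j) i)
    - FreeAbelianGroup.of (facePlus up dn (faceMinus w j) i))
  - (FreeAbelianGroup.of (faceMinus (facePlus up dn w j) i)
    - FreeAbelianGroup.of (facePlus up dn (facePlus up dn w j) i))

lemma T_swap (hYB1 : ∀ a b c : X, up (up a b) (dn c b) = up (up a c) (up b c))
    (hYB2 : ∀ a b c : X, dn (dn c b) (up a b) = dn (dn c a) (dn b a))
    (hYB3 : ∀ a b c : X, up (dn b a) (dn c a) = dn (up b c) (up a c))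
    (h : (i:ℕ) < (j:ℕ)) (hj : j ≠ 0) (w : Fin (n+2) → X) :
    T up dn w j i = T up dn w i.castSucc (j.pred hj) := by
  rw [T, T, faceMM h hj, facePM h hj, faceMP h hj, facePP hYB1 hYB2 hYB3 h hj]
  abel

end BirackAux

open BirackAux

/-- If the operations satisfy the three birack Yang–Baxter identities, then
`∂ ∘ ∂ = 0`, so the cubes form a chain complex. -/
theorem birack_boundary_squared_zero {X : Type*} (up dn : X → X → X)
    (hYB1 : ∀ a b c : X, up (up a b) (dn c b) = up (up a c) (up b c))
    (hYB2 : ∀ a b c : X, dn (dn c b) (up a b) = dn (dn c a) (dn b a))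
    (hYB3 : ∀ a b c : X, up (dn b a) (dn c a) = dn (up b c) (up a c)) :
    ∀ n : ℕ,
      (birackBoundary up dn n).comp (birackBoundary up dn (n + 1)) = 0 := by
  intro n
  ext w
  show birackBoundary up dn n (birackBoundary up dn (n+1) (FreeAbelianGroup.of w)) = 0
  rw [birackBoundary, birackBoundary, FreeAbelianGroup.lift_apply_of, map_sum]
  simp only [map_zsmul, map_sub, FreeAbelianGroup.lift_apply_of]
  -- turn into a double sum of signed T's
  have step1 : ∀ j : Fin (n+2),
      ((-1:ℤ) ^ ((j:ℕ)+1)) •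
        ((∑ i : Fin (n+1), ((-1:ℤ) ^ ((i:ℕ)+1)) •
            (FreeAbelianGroup.of (faceMinus (faceMinus w j) i)
              - FreeAbelianGroup.of (facePlus up dn (faceMinus w j) i)))
          - (∑ i : Fin (n+1), ((-1:ℤ) ^ ((i:ℕ)+1)) •
            (FreeAbelianGroup.of (faceMinus (facePlus up dn w j) i)
              - FreeAbelianGroup.of (facePlus up dn (facePlus up dn w j) i))))
      = ∑ i : Fin (n+1),
          ((-1:ℤ) ^ ((j:ℕ)+1) * (-1:ℤ) ^ ((i:ℕ)+1)) • T up dn w j i := by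
    intro j
    rw [← Finset.sum_sub_distrib, Finset.smul_sum]
    refine Finset.sum_congr rfl fun i _ => ?_
    rw [← smul_sub, smul_smul, T]
  rw [Finset.sum_congr rfl fun j _ => step1 j]
  rw [← Finset.sum_product']
  set f : Fin (n+2) × Fin (n+1) → FreeAbelianGroup (Fin n → X) := fun p =>
    ((-1:ℤ) ^ ((p.1:ℕ)+1) * (-1:ℤ) ^ ((p.2:ℕ)+1)) • T up dn w p.1 p.2 with hf
  show ∑ p ∈ Finset.univ ×ˢ Finset.univ, f p = 0
  -- involution
  have hlast : ∀ p : Fin (n+2) × Fin (n+1), ¬ ((p.2:ℕ) < (p.1:ℕ)) → p.1 ≠ Fin.last (n+1) := by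
    intro p hlt he
    have := p.2.isLt
    rw [he] at hlt
    simp [Fin.last] at hlt; omega
  have hzero : ∀ p : Fin (n+2) × Fin (n+1), ((p.2:ℕ) < (p.1:ℕ)) → p.1 ≠ 0 := by
    intro p hlt he
    rw [he] at hlt
    simp at hlt
  classical
  set g : Fin (n+2) × Fin (n+1) → Fin (n+2) × Fin (n+1) := fun p =>
    if h : (p.2:ℕ) < (p.1:ℕ) then (p.2.castSucc, p.1.pred (hzero p h))
    else (p.2.succ, p.1.castPred (hlast p h)) with hg
  -- key cancellation in the ordered case
  have key : ∀ (jj : Fin (n+2)) (ii : Fin (n+1)) (h : (ii:ℕ) < (jj:ℕ)),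
      f (jj, ii) + f (ii.castSucc, jj.pred (hzero (jj, ii) h)) = 0 := by
    intro jj ii h
    have hj : jj ≠ 0 := hzero (jj, ii) h
    have hT := T_swap (up := up) (dn := dn) hYB1 hYB2 hYB3 h hj w
    have hsign : ((-1:ℤ) ^ (((ii.castSucc : Fin (n+2)):ℕ)+1) * (-1:ℤ) ^ (((jj.pred hj):ℕ)+1))
        = -(((-1:ℤ) ^ ((jj:ℕ)+1)) * (-1:ℤ) ^ ((ii:ℕ)+1)) := by
      obtain ⟨m, hm⟩ : ∃ m, (jj:ℕ) = m + 1 :=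
        ⟨(jj:ℕ) - 1, by have : (jj:ℕ) ≠ 0 := Fin.val_ne_zero_iff.mpr hj; omega⟩
      simp only [Fin.coe_castSucc, Fin.coe_pred, hm, Nat.add_sub_cancel, pow_succ]
      ring
    simp only [hf, hT, hsign, neg_smul]
    abel
  refine Finset.sum_ninvolution g ?_ ?_ (fun _ => Finset.mem_univ _) ?_
  · intro p
    by_cases h : (p.2:ℕ) < (p.1:ℕ)
    · rw [hg]
      simp only [h, dif_pos]
      exact key p.1 p.2 h
    · have h2 : ((p.1.castPred (hlast p h) : Fin (n+1)):ℕ) < ((p.2.succ : Fin (n+2)):ℕ) := by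
        simp only [Fin.coe_castPred, Fin.val_succ]
        omega
      have := key p.2.succ (p.1.castPred (hlast p h)) h2
      rw [hg]
      simp only [h, dif_neg, not_false_iff]
      rw [show ((p.1.castPred (hlast p h)).castSucc,
            (p.2.succ).pred (hzero (p.2.succ, p.1.castPred (hlast p h)) h2))
          = p by
        rw [Fin.castSucc_castPred, Fin.pred_succ]] at this
      rw [add_comm]
      convert this using 3
  · intro p _
    by_cases h : (p.2:ℕ) < (p.1:ℕ) <;> rw [hg] <;> simp only [h, dif_pos, dif_neg, not_false_iff]
    · intro he
      have := congrArg (fun q : Fin (n+2) × Fin (n+1) => (q.1 : ℕ)) he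
      simp only [Fin.coe_castSucc] at this
      omega
    · intro he
      have := congrArg (fun q : Fin (n+2) × Fin (n+1) => (q.1 : ℕ)) he
      simp only [Fin.val_succ] at this
      omega
  · intro p
    by_cases h : (p.2:ℕ) < (p.1:ℕ)
    · rw [hg]
      simp only [h, dif_pos]
      have hc : ¬ (((p.1.pred (hzero p h) : Fin (n+1)):ℕ) < ((p.2.castSucc : Fin (n+2)):ℕ)) := by
        simp only [Fin.coe_pred, Fin.coe_castSucc]; omega
      simp only [hc, dif_neg, not_false_iff]
      ext <;> simp [Fin.succ_pred, Fin.castPred_castSucc]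
    · rw [hg]
      simp only [h, dif_neg, not_false_iff]
      have hc : (((p.1.castPred (hlast p h) : Fin (n+1)):ℕ) < ((p.2.succ : Fin (n+2)):ℕ)) := by
        simp only [Fin.coe_castPred, Fin.val_succ]; omega
      simp only [hc, dif_pos]
      ext <;> simp [Fin.castSucc_castPred, Fin.pred_succ]
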